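/- arXiv:1903.10455 — 4 statements merged into one kernel-verified Lean document; each statement's English description precedes it below -/
import Mathlib

section
/- Let μ be a Borel probability measure on [0,1] whose support is not contained in {0,1}, and let A, B be positive definite n×n complex matrices. Then φ_μ(A,B) ≥ 0, and φ_μ(A,B) = 0 if and only if A = B. -/
open MeasureTheory Matrix
open scoped ComplexOrder

/-- `f_μ(x) = ∫_{[0,1]} x / ((1-λ)x + λ) dμ(λ)`. -/
noncomputable def fmu (μ : Measure ℝ) (x : ℝ) : ℝ := ∫ l, x / ((1 - l) * x + l) ∂μ

/-- The center of mass `c(μ) = ∫_{[0,1]} λ dμ(λ)`. -/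
noncomputable def cmu (μ : Measure ℝ) : ℝ := ∫ l, l ∂μ

/-- The positive square root of a positive definite matrix, via functional calculus. -/
noncomputable def matSqrt {n : ℕ} (A : Matrix (Fin n) (Fin n) ℂ) : Matrix (Fin n) (Fin n) ℂ :=
  cfc Real.sqrt A

/-- The Kubo–Ando mean `A σ_μ B = A^{1/2} f_μ(A^{-1/2} B A^{-1/2}) A^{1/2}`. -/
noncomputable def kuboAndo {n : ℕ} (μ : Measure ℝ) (A B : Matrix (Fin n) (Fin n) ℂ) :
    Matrix (Fin n) (Fin n) ℂ :=
  matSqrt A * cfc (fmu μ) ((matSqrt A)⁻¹ * B * (matSqrt A)⁻¹) * matSqrt A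

/-- The generalized quantum Hellinger divergence
`φ_μ(A,B) = Tr((1-c(μ))A + c(μ)B - A σ_μ B)`. -/
noncomputable def qhd {n : ℕ} (μ : Measure ℝ) (A B : Matrix (Fin n) (Fin n) ℂ) : ℝ :=
  (((1 - cmu μ) • A + cmu μ • B - kuboAndo μ A B).trace).re

section auxScalar
variable {μ : Measure ℝ} [IsProbabilityMeasure μ]

lemma denom_pos {x l : ℝ} (hx : 0 < x) (hl : l ∈ Set.Icc (0:ℝ) 1) : 0 < (1 - l) * x + l := by
  rcases hl.1.eq_or_lt with h | h
  · simp [← h]; linarith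
  · have : 0 ≤ (1-l)*x := mul_nonneg (by linarith [hl.2]) hx.le
    nlinarith

lemma hres (hμ01 : μ (Set.Icc (0 : ℝ) 1) = 1) : μ.restrict (Set.Icc 0 1) = μ := by
  refine Measure.restrict_eq_self_of_ae_mem ((MeasureTheory.ae_iff).2 ?_)
  show μ (Set.Icc (0:ℝ) 1)ᶜ = 0
  rw [measure_compl measurableSet_Icc (measure_ne_top μ _), hμ01, measure_univ, tsub_self]

lemma int1 (x : ℝ) (hx : 0 < x) :
    IntegrableOn (fun l => x / ((1 - l) * x + l)) (Set.Icc (0:ℝ) 1) μ := by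
  apply ContinuousOn.integrableOn_compact isCompact_Icc
  exact ContinuousOn.div continuousOn_const (by fun_prop)
    (fun l hl => (denom_pos hx hl).ne')

lemma int2 (x : ℝ) (hx : 0 < x) :
    IntegrableOn (fun l => l * (1 - l) * (x - 1)^2 / ((1 - l) * x + l)) (Set.Icc (0:ℝ) 1) μ := by
  apply ContinuousOn.integrableOn_compact isCompact_Icc
  exact ContinuousOn.div (by fun_prop) (by fun_prop) (fun l hl => (denom_pos hx hl).ne')

lemma int3 : IntegrableOn (fun l => (1 - l) + l * x) (Set.Icc (0:ℝ) 1) μ := by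
  apply ContinuousOn.integrableOn_compact isCompact_Icc
  fun_prop

lemma int4 : IntegrableOn (fun l : ℝ => l) (Set.Icc (0:ℝ) 1) μ := by
  apply ContinuousOn.integrableOn_compact isCompact_Icc
  fun_prop

/-- the key scalar identity -/
lemma gval (hμ01 : μ (Set.Icc (0 : ℝ) 1) = 1) (x : ℝ) (hx : 0 < x) :
    (1 - cmu μ) + cmu μ * x - fmu μ x
      = ∫ l, l * (1 - l) * (x - 1)^2 / ((1 - l) * x + l) ∂μ := by
  have hr := hres hμ01
  have h1 : (1 - cmu μ) + cmu μ * x = ∫ l, ((1 - l) + l * x) ∂μ := by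
    rw [show (fun l : ℝ => (1 - l) + l * x) = (fun l : ℝ => 1 + (x - 1) * l) by funext l; ring]
    rw [integral_add (integrable_const 1) (by rw [← hr]; exact int4.const_mul _)]
    rw [show (fun a : ℝ => (x-1)*a) = fun a : ℝ => (x-1) • a from rfl, integral_smul,
      integral_const, probReal_univ]
    simp only [ENNReal.toReal_one, smul_eq_mul, cmu]
    ring
  rw [h1, fmu, ← integral_sub (by rw [← hr]; exact int3) (by rw [← hr]; exact int1 x hx)]
  rw [← hr]
  refine setIntegral_congr_fun measurableSet_Icc (fun l hl => ?_)
  have hd := (denom_pos hx hl).ne'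
  field_simp
  ring

lemma g_nonneg (hμ01 : μ (Set.Icc (0 : ℝ) 1) = 1) (x : ℝ) (hx : 0 < x) :
    0 ≤ (1 - cmu μ) + cmu μ * x - fmu μ x := by
  rw [gval hμ01 x hx, ← hres hμ01]
  refine setIntegral_nonneg measurableSet_Icc (fun l hl => ?_)
  have := denom_pos hx hl
  have h1 : 0 ≤ l * (1-l) * (x-1)^2 :=
    mul_nonneg (mul_nonneg hl.1 (by linarith [hl.2])) (sq_nonneg _)
  positivity

lemma g_eq_zero (hμ01 : μ (Set.Icc (0 : ℝ) 1) = 1) (hsupp : μ ({0, 1} : Set ℝ)ᶜ ≠ 0)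
    (x : ℝ) (hx : 0 < x) (hg : (1 - cmu μ) + cmu μ * x - fmu μ x = 0) : x = 1 := by
  by_contra hx1
  have hIoo : μ (Set.Ioo (0:ℝ) 1) ≠ 0 := by
    intro h0
    apply hsupp
    have hsub : ({0, 1} : Set ℝ)ᶜ ⊆ Set.Ioo (0:ℝ) 1 ∪ (Set.Icc (0:ℝ) 1)ᶜ := by
      intro l hl
      simp only [Set.mem_compl_iff, Set.mem_insert_iff, Set.mem_singleton_iff, not_or] at hl
      by_cases hI : l ∈ Set.Icc (0:ℝ) 1
      · exact Or.inl ⟨lt_of_le_of_ne hI.1 (Ne.symm hl.1), lt_of_le_of_ne hI.2 hl.2⟩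
      · exact Or.inr hI
    refine measure_mono_null hsub ?_
    have hc : μ (Set.Icc (0:ℝ) 1)ᶜ = 0 := by
      rw [measure_compl measurableSet_Icc (measure_ne_top μ _), hμ01, measure_univ, tsub_self]
    exact measure_union_null h0 hc
  rw [gval hμ01 x hx] at hg
  have hr := hres hμ01
  have hint : Integrable (fun l => l * (1 - l) * (x - 1)^2 / ((1 - l) * x + l)) μ := by
    rw [← hr]; exact int2 x hx
  have hae : 0 ≤ᵐ[μ] fun l => l * (1 - l) * (x - 1)^2 / ((1 - l) * x + l) := by
    rw [← hr]
    refine (ae_restrict_iff' measurableSet_Icc).2 (.of_forall fun l hl => ?_)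
    have := denom_pos hx hl
    have h1 : 0 ≤ l * (1-l) * (x-1)^2 :=
      mul_nonneg (mul_nonneg hl.1 (by linarith [hl.2])) (sq_nonneg _)
    positivity
  have hzero := (integral_eq_zero_iff_of_nonneg_ae hae hint).1 hg
  have : μ {l | ¬ (l * (1 - l) * (x - 1)^2 / ((1 - l) * x + l) = 0)} = 0 := by
    have := hzero
    rw [Filter.EventuallyEq, MeasureTheory.ae_iff] at this
    simpa using this
  apply hIoo
  refine measure_mono_null (fun l hl => ?_) this
  simp only [Set.mem_setOf_eq]
  have hl' : l ∈ Set.Icc (0:ℝ) 1 := Set.Ioo_subset_Icc_self hl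
  have hd := denom_pos hx hl'
  have hne : x - 1 ≠ 0 := sub_ne_zero.2 hx1
  have h1 : 0 < l * (1-l) * (x-1)^2 := by
    have h2 : 0 < (x-1)^2 := by positivity
    exact mul_pos (mul_pos hl.1 (by linarith [hl.2])) h2
  exact (div_pos h1 hd).ne'

lemma fmu_one : fmu μ 1 = 1 := by
  rw [fmu]
  have : (fun l : ℝ => (1:ℝ) / ((1 - l) * 1 + l)) = fun _ => (1:ℝ) := by
    funext l; rw [show (1 - l) * 1 + l = 1 by ring, div_one]
  rw [this, integral_const, probReal_univ]
  simp
end auxScalar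

section auxMatrix
variable {n : ℕ}

lemma trace_psd_nonneg {N : Matrix (Fin n) (Fin n) ℂ} (hN : N.PosSemidef) : 0 ≤ N.trace := by
  rw [Matrix.trace]
  refine Finset.sum_nonneg fun i _ => ?_
  have := hN.dotProduct_mulVec_nonneg (Pi.single i 1)
  simpa [Matrix.mulVec_single, dotProduct, Pi.single_apply, Matrix.diag] using this

lemma psd_trace_eq_zero {N : Matrix (Fin n) (Fin n) ℂ} (hN : N.PosSemidef)
    (h : N.trace = 0) : N = 0 := by
  set T := cfc Real.sqrt N with hTdef
  have hT : T * T = N := by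
    have hNsa : IsSelfAdjoint N := hN.1
    rw [hTdef, ← cfc_mul Real.sqrt Real.sqrt N]
    calc cfc (fun x => Real.sqrt x * Real.sqrt x) N
        = cfc (id : ℝ → ℝ) N :=
          cfc_congr (fun x hx => Real.mul_self_sqrt (by
            rw [hN.1.spectrum_real_eq_range_eigenvalues] at hx
            obtain ⟨i, rfl⟩ := hx
            exact hN.eigenvalues_nonneg i))
      _ = N := cfc_id ℝ N
  have hTH : Tᴴ = T := (cfc_predicate Real.sqrt N : IsSelfAdjoint (cfc Real.sqrt N))
  have htr : (Tᴴ * T).trace = 0 := by rw [hTH, hT]; exact h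
  have hdiag : ∀ j, (Tᴴ * T) j j = 0 := by
    have hnn : ∀ j ∈ Finset.univ, (0:ℂ) ≤ (Tᴴ * T) j j := by
      intro j _
      simp only [Matrix.mul_apply, Matrix.conjTranspose_apply]
      exact Finset.sum_nonneg fun i _ => star_mul_self_nonneg _
    intro j
    exact (Finset.sum_eq_zero_iff_of_nonneg hnn).1 htr j (Finset.mem_univ j)
  have hT0 : T = 0 := by
    ext i j
    have := hdiag j
    simp only [Matrix.mul_apply, Matrix.conjTranspose_apply] at this
    have hcol : (fun i => T i j) = 0 := by
      apply dotProduct_star_self_eq_zero.1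
      simpa [dotProduct] using this
    exact congr_fun hcol i
  rw [← hT, hT0, mul_zero]

lemma trace_mul_psd_nonneg {A M R : Matrix (Fin n) (Fin n) ℂ} (hRH : R.IsHermitian)
    (hRA : R * R = A) (hM : M.PosSemidef) : 0 ≤ (A * M).trace := by
  have h1 : (A * M).trace = (Rᴴ * M * R).trace := by
    rw [hRH.eq, ← hRA, Matrix.mul_assoc, Matrix.trace_mul_comm]
  rw [h1]
  exact trace_psd_nonneg (hM.conjTranspose_mul_mul_same R)

lemma trace_mul_psd_zero {A M R : Matrix (Fin n) (Fin n) ℂ} (hRH : R.IsHermitian)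
    (hRA : R * R = A) (hdet : IsUnit A.det) (hM : M.PosSemidef)
    (h : (A * M).trace = 0) : M = 0 := by
  have hRdet : IsUnit R.det := by
    have : R.det * R.det = A.det := by rw [← Matrix.det_mul, hRA]
    exact isUnit_of_mul_isUnit_left (this ▸ hdet)
  have h1 : (A * M).trace = (Rᴴ * M * R).trace := by
    rw [hRH.eq, ← hRA, Matrix.mul_assoc, Matrix.trace_mul_comm]
  have hzero : Rᴴ * M * R = 0 :=
    psd_trace_eq_zero (hM.conjTranspose_mul_mul_same R) (by rw [← h1, h])
  rw [hRH.eq] at hzero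
  have hM0 : M = R⁻¹ * (R * M * R) * R⁻¹ := by
    rw [Matrix.mul_assoc R M R, ← Matrix.mul_assoc R⁻¹ R (M * R),
      Matrix.nonsing_inv_mul R hRdet, Matrix.one_mul, Matrix.mul_assoc M R R⁻¹,
      Matrix.mul_nonsing_inv R hRdet, Matrix.mul_one]
  rw [hM0, hzero, Matrix.mul_zero, Matrix.zero_mul]

lemma posDef_conj {B C : Matrix (Fin n) (Fin n) ℂ} (hB : B.PosDef) (hC : IsUnit C.det) :
    (Cᴴ * B * C).PosDef := by
  refine .of_dotProduct_mulVec_pos (Matrix.isHermitian_conjTranspose_mul_mul C hB.1) fun x hx => ?_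
  have hCx : C *ᵥ x ≠ 0 := by
    intro h0
    apply hx
    have := congrArg (fun v => C⁻¹ *ᵥ v) h0
    simpa [Matrix.mulVec_mulVec, Matrix.nonsing_inv_mul C hC] using this
  simpa only [star_mulVec, Matrix.dotProduct_mulVec, Matrix.vecMul_vecMul]
    using hB.dotProduct_mulVec_pos hCx
lemma complex_nonneg_helper {r : ℝ} (h : 0 ≤ r) : (0:ℂ) ≤ (r:ℂ) := by
  rw [Complex.le_def]
  simp [h]

lemma spec_pos {A : Matrix (Fin n) (Fin n) ℂ} (hA : A.PosDef) :
    ∀ x ∈ spectrum ℝ A, 0 < x := by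
  intro x hx
  rw [hA.1.spectrum_real_eq_range_eigenvalues] at hx
  obtain ⟨i, rfl⟩ := hx
  exact hA.eigenvalues_pos i

lemma sqrt_sq' {A : Matrix (Fin n) (Fin n) ℂ} (hA : A.PosDef) :
    cfc Real.sqrt A * cfc Real.sqrt A = A := by
  have hAsa : IsSelfAdjoint A := hA.1
  rw [← cfc_mul Real.sqrt Real.sqrt A]
  calc cfc (fun x => Real.sqrt x * Real.sqrt x) A
      = cfc (id : ℝ → ℝ) A :=
        cfc_congr (fun x hx => Real.mul_self_sqrt (spec_pos hA x hx).le)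
    _ = A := cfc_id ℝ A

lemma cfc_psd {X : Matrix (Fin n) (Fin n) ℂ} (hX : IsSelfAdjoint X) (f : ℝ → ℝ)
    (hf : ∀ x ∈ spectrum ℝ X, 0 ≤ f x) : (cfc f X).PosSemidef := by
  have hXH : X.IsHermitian := hX
  rw [hXH.cfc_eq]
  rw [Matrix.IsHermitian.cfc]
  rw [Unitary.conjStarAlgAut_apply, Matrix.star_eq_conjTranspose]
  refine Matrix.PosSemidef.mul_mul_conjTranspose_same ?_ _
  refine (Matrix.posSemidef_diagonal_iff).2 fun i => ?_
  have : 0 ≤ f (hXH.eigenvalues i) :=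
    hf _ (hXH.eigenvalues_mem_spectrum_real i)
  simpa using complex_nonneg_helper this

lemma cfc_eigen_one {X : Matrix (Fin n) (Fin n) ℂ} (hX : X.PosDef)
    (h1 : ∀ x ∈ spectrum ℝ X, x = 1) : X = 1 := by
  have hXH : X.IsHermitian := hX.1
  have heig : ∀ i, hXH.eigenvalues i = 1 := fun i =>
    h1 _ (hXH.eigenvalues_mem_spectrum_real i)
  have := hXH.spectral_theorem
  rw [this]
  have : Matrix.diagonal (RCLike.ofReal ∘ hXH.eigenvalues) = (1 : Matrix (Fin n) (Fin n) ℂ) := by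
    ext i j
    simp [Matrix.diagonal_apply, Matrix.one_apply, Function.comp, heig]
  rw [this, Unitary.conjStarAlgAut_apply, Matrix.mul_one]
  simpa using Unitary.coe_mul_star_self hXH.eigenvectorUnitary
end auxMatrix

section main

variable {n : ℕ}

lemma contOn_spec (X : Matrix (Fin n) (Fin n) ℂ) (f : ℝ → ℝ) :
    ContinuousOn f (spectrum ℝ X) :=
  Matrix.finite_real_spectrum.continuousOn f

lemma matSqrt_mul_self {A : Matrix (Fin n) (Fin n) ℂ} (hA : A.PosDef) :
    matSqrt A * matSqrt A = A := sqrt_sq' hA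

lemma matSqrt_isHermitian {A : Matrix (Fin n) (Fin n) ℂ} (hA : A.PosDef) :
    (matSqrt A).IsHermitian :=
  (cfc_predicate Real.sqrt A : IsSelfAdjoint (cfc Real.sqrt A))

lemma matSqrt_det_isUnit {A : Matrix (Fin n) (Fin n) ℂ} (hA : A.PosDef) :
    IsUnit (matSqrt A).det := by
  have hAdet : A.det ≠ 0 := hA.det_pos.ne'
  have : (matSqrt A).det * (matSqrt A).det = A.det := by
    rw [← Matrix.det_mul, matSqrt_mul_self hA]
  refine isUnit_iff_ne_zero.2 fun h0 => hAdet ?_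
  rw [← this, h0, mul_zero]

lemma X_posDef {A B : Matrix (Fin n) (Fin n) ℂ} (hA : A.PosDef) (hB : B.PosDef) :
    ((matSqrt A)⁻¹ * B * (matSqrt A)⁻¹).PosDef := by
  have h1 : ((matSqrt A)⁻¹)ᴴ = (matSqrt A)⁻¹ := (matSqrt_isHermitian hA).inv
  have h2 : IsUnit ((matSqrt A)⁻¹).det := by
    exact Matrix.isUnit_nonsing_inv_det _ (matSqrt_det_isUnit hA)
  have := posDef_conj hB h2
  rwa [h1] at this

lemma B_eq {A B : Matrix (Fin n) (Fin n) ℂ} (hA : A.PosDef) :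
    B = matSqrt A * ((matSqrt A)⁻¹ * B * (matSqrt A)⁻¹) * matSqrt A := by
  have hd := matSqrt_det_isUnit hA
  simp only [Matrix.mul_assoc]
  rw [Matrix.nonsing_inv_mul _ hd, Matrix.mul_one, ← Matrix.mul_assoc,
    Matrix.mul_nonsing_inv _ hd, Matrix.one_mul]

/-- decomposition of `cfc g X` -/
lemma cfc_g_decomp (μ : Measure ℝ) (X : Matrix (Fin n) (Fin n) ℂ) (hX : IsSelfAdjoint X) :
    cfc (fun x => (1 - cmu μ) + cmu μ * x - fmu μ x) X
      = (1 - cmu μ) • (1 : Matrix (Fin n) (Fin n) ℂ) + cmu μ • X - cfc (fmu μ) X := by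
  rw [cfc_sub (fun x => (1 - cmu μ) + cmu μ * x) (fmu μ) X (contOn_spec X _) (contOn_spec X _)]
  rw [cfc_const_add (1 - cmu μ) (fun x => cmu μ * x) X (contOn_spec X _) hX]
  rw [cfc_const_mul_id (cmu μ) X hX, Algebra.algebraMap_eq_smul_one]

/-- The master identity. -/
lemma qhd_eq_trace (μ : Measure ℝ) {A B : Matrix (Fin n) (Fin n) ℂ} (hA : A.PosDef)
    (hB : B.PosDef) :
    qhd μ A B
      = ((A * cfc (fun x => (1 - cmu μ) + cmu μ * x - fmu μ x)
          ((matSqrt A)⁻¹ * B * (matSqrt A)⁻¹)).trace).re := by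
  set S := matSqrt A with hS
  set X := (matSqrt A)⁻¹ * B * (matSqrt A)⁻¹ with hX
  have hSS : S * S = A := matSqrt_mul_self hA
  have hXsa : IsSelfAdjoint X := (X_posDef hA hB).1
  have hBX : B = S * X * S := B_eq hA
  have e1 : (A * ((1 - cmu μ) • (1 : Matrix (Fin n) (Fin n) ℂ))).trace
      = ((1 - cmu μ) • A).trace := by
    rw [mul_smul_comm, Matrix.mul_one]
  have e2 : (A * (cmu μ • X)).trace = (cmu μ • B).trace := by
    rw [mul_smul_comm, Matrix.trace_smul, Matrix.trace_smul]
    congr 1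
    rw [hBX, Matrix.trace_mul_cycle, hSS]
  have e3 : (kuboAndo μ A B).trace = (A * cfc (fmu μ) X).trace := by
    show (S * cfc (fmu μ) X * S).trace = _
    rw [Matrix.trace_mul_cycle, hSS]
  rw [qhd, cfc_g_decomp μ X hXsa]
  congr 1
  rw [Matrix.mul_sub, Matrix.mul_add, Matrix.trace_sub, Matrix.trace_add, Matrix.trace_sub,
    Matrix.trace_add, e1, e2, ← e3]

end main

/-- If `μ` is a Borel probability measure on `[0,1]` whose support is not
contained in `{0,1}`, and `A, B` are positive definite, then `φ_μ(A,B) ≥ 0`, with equality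
iff `A = B`. -/
theorem qhd_nonneg_and_eq_zero_iff {n : ℕ} (μ : Measure ℝ) [IsProbabilityMeasure μ]
    (hμ01 : μ (Set.Icc (0 : ℝ) 1) = 1) (hsupp : μ ({0, 1} : Set ℝ)ᶜ ≠ 0)
    (A B : Matrix (Fin n) (Fin n) ℂ) (hA : A.PosDef) (hB : B.PosDef) :
    0 ≤ qhd μ A B ∧ (qhd μ A B = 0 ↔ A = B) := by
  rcases Nat.eq_zero_or_pos n with hn | hn
  · subst hn
    have hq : qhd μ A B = 0 := by
      unfold qhd
      rw [Matrix.trace_eq_zero_of_isEmpty]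
      simp
    have hab : A = B := by ext i j; exact i.elim0
    exact ⟨le_of_eq hq.symm, ⟨fun _ => hab, fun _ => hq⟩⟩
  · haveI : Nontrivial (Matrix (Fin n) (Fin n) ℂ) := by
      refine ⟨0, 1, fun h => ?_⟩
      have := congrFun (congrFun h ⟨0, hn⟩) ⟨0, hn⟩
      simp [Matrix.one_apply] at this
    set g : ℝ → ℝ := fun x => (1 - cmu μ) + cmu μ * x - fmu μ x with hg
    set S := matSqrt A with hSdef
    set X := (matSqrt A)⁻¹ * B * (matSqrt A)⁻¹ with hXdef
    have hSS : S * S = A := matSqrt_mul_self hA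
    have hSH : S.IsHermitian := matSqrt_isHermitian hA
    have hXpd : X.PosDef := X_posDef hA hB
    have hXsa : IsSelfAdjoint X := hXpd.1
    have hmaster : qhd μ A B = ((A * cfc g X).trace).re := qhd_eq_trace μ hA hB
    have hMpsd : (cfc g X).PosSemidef :=
      cfc_psd hXsa g (fun x hx => g_nonneg hμ01 x (spec_pos hXpd x hx))
    have htrpos : 0 ≤ (A * cfc g X).trace := trace_mul_psd_nonneg hSH hSS hMpsd
    have him : ((A * cfc g X).trace).im = 0 := ((Complex.le_def.1 htrpos).2).symm
    have hre : 0 ≤ ((A * cfc g X).trace).re := by simpa using (Complex.le_def.1 htrpos).1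
    refine ⟨hmaster ▸ hre, ?_, ?_⟩
    · intro h0
      rw [hmaster] at h0
      have htr0 : (A * cfc g X).trace = 0 := Complex.ext (by simpa using h0) (by simpa using him)
      have hM0 : cfc g X = 0 :=
        trace_mul_psd_zero hSH hSS (isUnit_iff_ne_zero.2 hA.det_pos.ne') hMpsd htr0
      have hspec : g '' spectrum ℝ X = {0} := by
        rw [← cfc_map_spectrum g X hXsa (contOn_spec X g), hM0, spectrum.zero_eq]
      have hXone : X = 1 := by
        refine cfc_eigen_one hXpd (fun x hx => ?_)
        refine g_eq_zero hμ01 hsupp x (spec_pos hXpd x hx) ?_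
        have : g x ∈ ({0} : Set ℝ) := hspec ▸ Set.mem_image_of_mem g hx
        simpa [hg] using this
      have : B = S * X * S := B_eq hA
      rw [this, hXone, Matrix.mul_one, hSS]
    · rintro rfl
      have hXone : X = 1 := by
        rw [hXdef, ← hSdef]
        rw [← hSS]
        rw [← Matrix.mul_assoc S⁻¹ S S, Matrix.nonsing_inv_mul _ (matSqrt_det_isUnit hA),
          Matrix.one_mul, Matrix.mul_nonsing_inv _ (matSqrt_det_isUnit hA)]
      rw [hmaster, hXone]
      have hone : spectrum ℝ (1 : Matrix (Fin n) (Fin n) ℂ) = {1} := spectrum.one_eq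
      have hcongr : ∀ x ∈ spectrum ℝ (1 : Matrix (Fin n) (Fin n) ℂ), g x = (0 : ℝ → ℝ) x := by
        intro x hx
        rw [hone, Set.mem_singleton_iff] at hx
        subst hx
        show (1 - cmu μ) + cmu μ * 1 - fmu μ 1 = 0
        rw [fmu_one]; ring
      rw [cfc_congr hcongr, cfc_zero, Matrix.mul_zero, Matrix.trace_zero]
      simp
end

section
/- Let μ be a Borel probability measure on [0,1] and A a positive definite n×n complex matrix. Then the second Fréchet derivative of the map X ↦ φ_μ(A,X) at X = A is positive semidefinite as a quadratic form: D²(φ_μ(A,·))(A)[Y,Y] ≥ 0 for every Hermitian matrix Y. -/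
open MeasureTheory Matrix
open scoped ComplexOrder

section analysisLemmas
variable (μ : Measure ℝ) [IsProbabilityMeasure μ]



lemma ae_mem_Icc (hμ01 : μ (Set.Icc (0 : ℝ) 1) = 1) : ∀ᵐ l ∂μ, l ∈ Set.Icc (0 : ℝ) 1 :=
  mem_ae_iff.mpr <| by
    rw [show {l : ℝ | l ∈ Set.Icc (0:ℝ) 1}ᶜ = (Set.Icc (0:ℝ) 1)ᶜ from rfl]
    exact (prob_compl_eq_zero_iff measurableSet_Icc).mpr hμ01

lemma den_lb {l x m : ℝ} (hl : l ∈ Set.Icc (0:ℝ) 1) (hmx : m ≤ x) (hm1 : m ≤ 1) :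
    m ≤ (1 - l) * x + l := by
  nlinarith [mul_nonneg (sub_nonneg.2 hl.2) (sub_nonneg.2 hmx), mul_nonneg hl.1 (sub_nonneg.2 hm1)]

lemma hasDeriv_inner1 (l x : ℝ) (hne : (1 - l) * x + l ≠ 0) :
    HasDerivAt (fun y => y / ((1 - l) * y + l)) (l / ((1 - l) * x + l) ^ 2) x := by
  have hden : HasDerivAt (fun y => (1 - l) * y + l) (1 - l) x := by
    simpa using ((hasDerivAt_id x).const_mul (1 - l)).add_const l
  have h := (hasDerivAt_id x).div hden hne
  refine h.congr_deriv ?_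
  simp only [id_eq]
  field_simp
  ring

lemma hasDeriv_inner2 (l x : ℝ) (hne : (1 - l) * x + l ≠ 0) :
    HasDerivAt (fun y => l / ((1 - l) * y + l) ^ 2)
      ((-2) * (l * (1 - l)) / ((1 - l) * x + l) ^ 3) x := by
  have hden : HasDerivAt (fun y => (1 - l) * y + l) (1 - l) x := by
    simpa using ((hasDerivAt_id x).const_mul (1 - l)).add_const l
  have hpow := hden.pow 2
  have h := (hasDerivAt_const x l).div hpow (pow_ne_zero 2 hne)
  refine h.congr_deriv ?_
  simp only [Pi.pow_apply]
  field_simp [hne]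
  ring

lemma meas1 (x : ℝ) : Measurable fun l : ℝ => x / ((1 - l) * x + l) :=
  measurable_const.div (((measurable_const.sub measurable_id).mul_const x).add measurable_id)

lemma meas2 (x : ℝ) : Measurable fun l : ℝ => l / ((1 - l) * x + l) ^ 2 :=
  measurable_id.div ((((measurable_const.sub measurable_id).mul_const x).add
    measurable_id).pow_const 2)

lemma meas3 (x : ℝ) : Measurable fun l : ℝ => (-2) * (l * (1 - l)) / ((1 - l) * x + l) ^ 3 :=
  (measurable_const.mul (measurable_id.mul (measurable_const.sub measurable_id))).div
    ((((measurable_const.sub measurable_id).mul_const x).add measurable_id).pow_const 3)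

lemma fmu_hasDerivAt (hμ01 : μ (Set.Icc (0 : ℝ) 1) = 1) (x₀ : ℝ) (hx : 0 < x₀) :
    HasDerivAt (fmu μ) (∫ l, l / ((1 - l) * x₀ + l) ^ 2 ∂μ) x₀ := by
  have hae := ae_mem_Icc μ hμ01
  set m := min (x₀ / 2) 1 with hm
  have hm0 : 0 < m := lt_min (by linarith) one_pos
  have hball : ∀ x ∈ Metric.ball x₀ (x₀ / 2), m ≤ x := by
    intro x hxb
    rw [Metric.mem_ball, Real.dist_eq, abs_lt] at hxb
    calc m ≤ x₀ / 2 := min_le_left _ _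
    _ ≤ x := by linarith [hxb.1]
  have hden : ∀ l ∈ Set.Icc (0:ℝ) 1, ∀ x ∈ Metric.ball x₀ (x₀ / 2),
      m ≤ (1 - l) * x + l := fun l hl x hxb => den_lb hl (hball x hxb) (min_le_right _ _)
  have hx₀ball : x₀ ∈ Metric.ball x₀ (x₀ / 2) := Metric.mem_ball_self (by linarith)
  have H := hasDerivAt_integral_of_dominated_loc_of_deriv_le (μ := μ)
      (F := fun x l => x / ((1 - l) * x + l))
      (F' := fun x l => l / ((1 - l) * x + l) ^ 2)
      (bound := fun _ => 1 / m ^ 2) (x₀ := x₀) (Metric.ball_mem_nhds x₀ (by linarith : (0:ℝ) < x₀ / 2))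
      (Filter.Eventually.of_forall fun x => (meas1 x).aestronglyMeasurable)
      ?_ (meas2 x₀).aestronglyMeasurable ?_ (integrable_const _) ?_
  · exact H.2
  · refine (integrable_const (x₀ / m)).mono' (meas1 x₀).aestronglyMeasurable ?_
    filter_upwards [hae] with l hl
    have h1 := hden l hl x₀ hx₀ball
    rw [Real.norm_eq_abs, abs_of_nonneg (div_nonneg hx.le (by linarith))]
    exact div_le_div₀ hx.le le_rfl hm0 h1
  · filter_upwards [hae] with l hl x hxb
    have h1 := hden l hl x hxb
    rw [Real.norm_eq_abs, abs_of_nonneg (div_nonneg hl.1 (by positivity))]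
    exact div_le_div₀ zero_le_one hl.2 (by positivity) (pow_le_pow_left₀ hm0.le h1 2)
  · filter_upwards [hae] with l hl x hxb
    exact hasDeriv_inner1 l x (ne_of_gt (lt_of_lt_of_le hm0 (hden l hl x hxb)))

lemma F1_hasDerivAt (hμ01 : μ (Set.Icc (0 : ℝ) 1) = 1) (x₀ : ℝ) (hx : 0 < x₀) :
    HasDerivAt (fun x => ∫ l, l / ((1 - l) * x + l) ^ 2 ∂μ)
      (∫ l, (-2) * (l * (1 - l)) / ((1 - l) * x₀ + l) ^ 3 ∂μ) x₀ := by
  have hae := ae_mem_Icc μ hμ01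
  set m := min (x₀ / 2) 1 with hm
  have hm0 : 0 < m := lt_min (by linarith) one_pos
  have hball : ∀ x ∈ Metric.ball x₀ (x₀ / 2), m ≤ x := by
    intro x hxb
    rw [Metric.mem_ball, Real.dist_eq, abs_lt] at hxb
    calc m ≤ x₀ / 2 := min_le_left _ _
    _ ≤ x := by linarith [hxb.1]
  have hden : ∀ l ∈ Set.Icc (0:ℝ) 1, ∀ x ∈ Metric.ball x₀ (x₀ / 2),
      m ≤ (1 - l) * x + l := fun l hl x hxb => den_lb hl (hball x hxb) (min_le_right _ _)
  have hx₀ball : x₀ ∈ Metric.ball x₀ (x₀ / 2) := Metric.mem_ball_self (by linarith)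
  have H := hasDerivAt_integral_of_dominated_loc_of_deriv_le (μ := μ)
      (F := fun x l => l / ((1 - l) * x + l) ^ 2)
      (F' := fun x l => (-2) * (l * (1 - l)) / ((1 - l) * x + l) ^ 3)
      (bound := fun _ => 2 / m ^ 3) (x₀ := x₀) (Metric.ball_mem_nhds x₀ (by linarith : (0:ℝ) < x₀ / 2))
      (Filter.Eventually.of_forall fun x => (meas2 x).aestronglyMeasurable)
      ?_ (meas3 x₀).aestronglyMeasurable ?_ (integrable_const _) ?_
  · exact H.2
  · refine (integrable_const (1 / m ^ 2)).mono' (meas2 x₀).aestronglyMeasurable ?_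
    filter_upwards [hae] with l hl
    have h1 := hden l hl x₀ hx₀ball
    rw [Real.norm_eq_abs, abs_of_nonneg (div_nonneg hl.1 (by positivity))]
    exact div_le_div₀ zero_le_one hl.2 (by positivity) (pow_le_pow_left₀ hm0.le h1 2)
  · filter_upwards [hae] with l hl x hxb
    have h1 := hden l hl x hxb
    have hnum : |(-2) * (l * (1 - l))| ≤ 2 := by
      rw [abs_mul]
      have : |l * (1 - l)| ≤ 1 := by
        rw [abs_of_nonneg (mul_nonneg hl.1 (by linarith [hl.2]))]
        nlinarith [hl.1, hl.2]
      calc |(-2:ℝ)| * |l * (1 - l)| ≤ 2 * 1 := by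
            rw [abs_neg, abs_two]
            exact mul_le_mul_of_nonneg_left this (by norm_num)
      _ = 2 := by norm_num
    rw [Real.norm_eq_abs, abs_div, abs_of_nonneg (pow_nonneg (hm0.le.trans h1) 3)]
    exact div_le_div₀ (by norm_num) hnum (by positivity) (pow_le_pow_left₀ hm0.le h1 3)
  · filter_upwards [hae] with l hl x hxb
    exact hasDeriv_inner2 l x (ne_of_gt (lt_of_lt_of_le hm0 (hden l hl x hxb)))

lemma key_nonneg (hμ01 : μ (Set.Icc (0 : ℝ) 1) = 1) {m : ℕ} (a d : Fin m → ℝ)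
    (ha : ∀ i, 0 ≤ a i) (C0 C1 : ℝ) :
    0 ≤ iteratedDeriv 2 (fun t : ℝ => C0 + C1 * t - ∑ i, a i * fmu μ (1 + t * d i)) 0 := by
  have hae := ae_mem_Icc μ hμ01
  set Sd := ∑ i, |d i| with hSddef
  have hSd : 0 ≤ Sd := Finset.sum_nonneg fun i _ => abs_nonneg _
  set ε := (1 + Sd)⁻¹ with hεdef
  have hε : 0 < ε := inv_pos.2 (by linarith)
  have hpos : ∀ t ∈ Metric.ball (0:ℝ) ε, ∀ i, 0 < 1 + t * d i := by
    intro t ht i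
    rw [Metric.mem_ball, Real.dist_eq, sub_zero] at ht
    have h1 : |d i| ≤ Sd :=
      Finset.single_le_sum (f := fun i => |d i|) (fun i _ => abs_nonneg _) (Finset.mem_univ i)
    have h2 : |t * d i| < 1 := by
      rw [abs_mul]
      calc |t| * |d i| ≤ |t| * Sd := mul_le_mul_of_nonneg_left h1 (abs_nonneg t)
        _ ≤ ε * Sd := mul_le_mul_of_nonneg_right ht.le hSd
        _ = Sd / (1 + Sd) := by rw [div_eq_mul_inv, mul_comm]
        _ < 1 := (div_lt_one (by linarith)).mpr (by linarith)
    have h3 := neg_abs_le (t * d i)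
    rw [abs_mul] at h3
    nlinarith [abs_mul t (d i)]
  set F1 : ℝ → ℝ := fun x => ∫ l, l / ((1 - l) * x + l) ^ 2 ∂μ with hF1def
  have hstep : ∀ t ∈ Metric.ball (0:ℝ) ε,
      HasDerivAt (fun t : ℝ => C0 + C1 * t - ∑ i, a i * fmu μ (1 + t * d i))
        (C1 - ∑ i, a i * (F1 (1 + t * d i) * d i)) t := by
    intro t ht
    have h1 : HasDerivAt (fun t : ℝ => C0 + C1 * t) C1 t := by
      simpa using ((hasDerivAt_id t).const_mul C1).const_add C0
    refine h1.sub (HasDerivAt.fun_sum fun i _ => ?_)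
    have hin : HasDerivAt (fun t : ℝ => 1 + t * d i) (d i) t := by
      simpa using ((hasDerivAt_id t).mul_const (d i)).const_add 1
    have hcomp := (fmu_hasDerivAt μ hμ01 (1 + t * d i) (hpos t ht i)).comp t hin
    simpa [Function.comp_def] using hcomp.const_mul (a i)
  have hev : deriv (fun t : ℝ => C0 + C1 * t - ∑ i, a i * fmu μ (1 + t * d i))
      =ᶠ[nhds (0:ℝ)] fun t => C1 - ∑ i, a i * (F1 (1 + t * d i) * d i) := by
    filter_upwards [Metric.ball_mem_nhds (0:ℝ) hε] with t ht using (hstep t ht).deriv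
  set K2 : ℝ := ∫ l, -(2 * (l * (1 - l))) ∂μ with hK2def
  have h2nd : HasDerivAt (fun t : ℝ => C1 - ∑ i, a i * (F1 (1 + t * d i) * d i))
      (0 - ∑ i, a i * (K2 * (d i * d i))) 0 := by
    refine (hasDerivAt_const (0:ℝ) C1).sub (HasDerivAt.fun_sum fun i _ => ?_)
    have hin : HasDerivAt (fun t : ℝ => 1 + t * d i) (d i) 0 := by
      simpa using ((hasDerivAt_id (0:ℝ)).mul_const (d i)).const_add 1
    have h01 : (0:ℝ) < 1 + 0 * d i := by norm_num
    have hcomp := (F1_hasDerivAt μ hμ01 (1 + 0 * d i) h01).comp (0:ℝ) hin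
    have := (hcomp.mul_const (d i)).const_mul (a i)
    simpa [Function.comp_def, mul_assoc] using this
  have hK2 : K2 ≤ 0 := by
    refine integral_nonpos_of_ae ?_
    filter_upwards [hae] with l hl
    have h2 : 0 ≤ l * (1 - l) := mul_nonneg hl.1 (by linarith [hl.2])
    simp only [Pi.zero_apply]
    linarith
  have hiter : iteratedDeriv 2 (fun t : ℝ => C0 + C1 * t - ∑ i, a i * fmu μ (1 + t * d i)) 0
      = deriv (deriv (fun t : ℝ => C0 + C1 * t - ∑ i, a i * fmu μ (1 + t * d i))) 0 := by
    rw [show (2:ℕ) = 1 + 1 from rfl, iteratedDeriv_succ, iteratedDeriv_one]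
  rw [hiter, hev.deriv_eq, h2nd.deriv]
  have : ∑ i, a i * (K2 * (d i * d i)) ≤ 0 :=
    Finset.sum_nonpos fun i _ => mul_nonpos_of_nonneg_of_nonpos (ha i)
      (mul_nonpos_of_nonpos_of_nonneg hK2 (mul_self_nonneg _))
  linarith


end analysisLemmas

/-- The second Fréchet derivative of `X ↦ φ_μ(A,X)` at `X = A` is positive
semidefinite as a quadratic form: `D²(φ_μ(A,·))(A)[Y,Y] ≥ 0` for every Hermitian `Y`,
formalized via the second derivative of `t ↦ φ_μ(A, A + tY)` at `t = 0`. -/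
theorem qhd_second_deriv_at_diagonal_nonneg {n : ℕ} (μ : Measure ℝ) [IsProbabilityMeasure μ]
    (hμ01 : μ (Set.Icc (0 : ℝ) 1) = 1)
    (A : Matrix (Fin n) (Fin n) ℂ) (hA : A.PosDef) :
    ∀ Y : Matrix (Fin n) (Fin n) ℂ, Y.IsHermitian →
      0 ≤ iteratedDeriv 2 (fun t : ℝ => qhd μ A (A + t • Y)) 0 := by
  intro Y hY
  classical
  have hAH : A.IsHermitian := hA.isHermitian
  have hAsa : IsSelfAdjoint A := hAH
  set B := matSqrt A with hBdef
  have hspec : ∀ x ∈ spectrum ℝ A, 0 ≤ x := by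
    intro x hx
    rw [hAH.spectrum_real_eq_range_eigenvalues] at hx
    obtain ⟨i, rfl⟩ := hx
    exact (hA.eigenvalues_pos i).le
  have hBB : B * B = A := by
    have h1 : B * B = cfc (fun x => Real.sqrt x * Real.sqrt x) A := (cfc_mul _ _ A).symm
    have h2 : cfc (fun x => Real.sqrt x * Real.sqrt x) A = cfc (id : ℝ → ℝ) A :=
      cfc_congr fun x hx => Real.mul_self_sqrt (hspec x hx)
    exact h1.trans (h2.trans (cfc_id ℝ A))
  have hBsa : IsSelfAdjoint B := by
    rw [hBdef, matSqrt]; exact cfc_predicate _ _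
  have hBH : B.IsHermitian := hBsa
  have hdetA : A.det ≠ 0 := ne_of_gt hA.det_pos
  have hdetB : IsUnit B.det := by
    refine isUnit_iff_ne_zero.mpr fun h => hdetA ?_
    rw [← hBB, Matrix.det_mul, h, zero_mul]
  have hBiB : B⁻¹ * B = 1 := Matrix.nonsing_inv_mul B hdetB
  have hBBi : B * B⁻¹ = 1 := Matrix.mul_nonsing_inv B hdetB
  have hBiA : B⁻¹ * A * B⁻¹ = 1 := by
    rw [← hBB, ← Matrix.mul_assoc, hBiB, one_mul, hBBi]
  have hBiH : (B⁻¹).IsHermitian := hBH.inv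
  set S := B⁻¹ * Y * B⁻¹ with hSdef
  have hSH : S.IsHermitian := by
    show Sᴴ = S
    rw [hSdef]
    simp [Matrix.conjTranspose_mul, hBiH.eq, hY.eq, Matrix.mul_assoc]
  have hSsa : IsSelfAdjoint S := hSH
  set d : Fin n → ℝ := hSH.eigenvalues with hddef
  set U : Matrix (Fin n) (Fin n) ℂ := (hSH.eigenvectorUnitary : Matrix (Fin n) (Fin n) ℂ)
    with hUdef
  have hinner : ∀ t : ℝ, B⁻¹ * (A + t • Y) * B⁻¹ = 1 + t • S := by
    intro t
    rw [Matrix.mul_add, Matrix.add_mul, hBiA, Matrix.mul_smul, Matrix.smul_mul, hSdef]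
  have hfin : ∀ t : ℝ, (1 : Matrix (Fin n) (Fin n) ℂ) + t • S
      = cfc (fun x : ℝ => 1 + t * x) S := by
    intro t
    rw [cfc_const_add 1 (fun x => t * x) S, cfc_const_mul_id t S hSsa, _root_.map_one]
  have hcfc : ∀ t : ℝ, cfc (fmu μ) ((1 : Matrix (Fin n) (Fin n) ℂ) + t • S)
      = U * diagonal (RCLike.ofReal ∘ (fun x => fmu μ (1 + t * x)) ∘ d) * star U := by
    intro t
    have h1 := cfc_comp (fmu μ) (fun x : ℝ => 1 + t * x) S hSsa
      (Set.Finite.continuousOn ((Matrix.finite_real_spectrum (A := S)).image _) _)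
      (Continuous.continuousOn (by fun_prop))
    rw [Function.comp_def] at h1
    rw [hfin t, ← h1, hSH.cfc_eq]
    rfl
  set a : Fin n → ℝ := fun i => ((star U * A * U) i i).re with hadef
  have ha_nonneg : ∀ i, 0 ≤ a i := by
    intro i
    have h := hA.posSemidef.dotProduct_mulVec_nonneg (fun j => U j i)
    have he : (star U * A * U) i i = star (fun j => U j i) ⬝ᵥ (A *ᵥ fun j => U j i) := by
      simp only [Matrix.mul_apply, Matrix.mulVec, dotProduct, Matrix.star_apply,
        Pi.star_apply, Finset.sum_mul, Finset.mul_sum]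
      rw [Finset.sum_comm]
      exact Finset.sum_congr rfl fun k _ => Finset.sum_congr rfl fun j _ => by ring
    rw [hadef]
    simp only [he]
    rw [Complex.le_def] at h
    simpa using h.1
  have htr : ∀ t : ℝ, ((kuboAndo μ A (A + t • Y)).trace).re
      = ∑ i, a i * fmu μ (1 + t * d i) := by
    intro t
    rw [kuboAndo, ← hBdef, hinner t, hcfc t, Matrix.trace_mul_cycle, hBB]
    rw [show A * (U * diagonal (RCLike.ofReal ∘ (fun x => fmu μ (1 + t * x)) ∘ d) * star U)
        = (A * U * diagonal (RCLike.ofReal ∘ (fun x => fmu μ (1 + t * x)) ∘ d)) * star U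
        from by simp only [Matrix.mul_assoc], Matrix.trace_mul_comm,
      show star U * (A * U * diagonal (RCLike.ofReal ∘ (fun x => fmu μ (1 + t * x)) ∘ d))
        = (star U * A * U) * diagonal (RCLike.ofReal ∘ (fun x => fmu μ (1 + t * x)) ∘ d)
        from by simp only [Matrix.mul_assoc]]
    have hdiag : (star U * A * U * diagonal (RCLike.ofReal ∘ (fun x => fmu μ (1 + t * x)) ∘ d)).trace
        = ∑ i, (star U * A * U) i i * (RCLike.ofReal (fmu μ (1 + t * d i)) : ℂ) := by
      simp [Matrix.trace, Matrix.diag, Matrix.mul_diagonal]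
    rw [hdiag, Complex.re_sum]
    exact Finset.sum_congr rfl fun i _ => by
      simp [Complex.mul_re, hadef]
  have hlhs : ∀ t : ℝ, (((1 - cmu μ) • A + cmu μ • (A + t • Y)).trace).re
      = A.trace.re + (cmu μ * Y.trace.re) * t := by
    intro t
    rw [Matrix.trace_add, Matrix.trace_smul, Matrix.trace_smul, Matrix.trace_add,
      Matrix.trace_smul]
    simp only [Complex.add_re, Complex.real_smul, Complex.mul_re, Complex.ofReal_re,
      Complex.ofReal_im, Complex.sub_re, Complex.one_re, Complex.sub_im, Complex.one_im,
      Complex.add_im, Complex.mul_im]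
    ring
  have hg : (fun t : ℝ => qhd μ A (A + t • Y))
      = fun t => A.trace.re + (cmu μ * Y.trace.re) * t - ∑ i, a i * fmu μ (1 + t * d i) := by
    funext t
    rw [qhd, Matrix.trace_sub, Complex.sub_re, hlhs t, htr t]
  rw [hg]
  exact key_nonneg μ hμ01 a d ha_nonneg _ _
end

section
/- Let μ be a Borel probability measure on [0,1]. The generalized quantum Hellinger divergence φ_μ is jointly convex on pairs of positive definite n×n complex matrices: for all positive definite A₁, A₂, B₁, B₂ and all t ∈ [0,1], φ_μ(tA₁+(1-t)A₂, tB₁+(1-t)B₂) ≤ t·φ_μ(A₁,B₁) + (1-t)·φ_μ(A₂,B₂). -/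
open MeasureTheory Matrix
open scoped ComplexOrder

namespace MyAux
variable {n : ℕ} {M : Matrix (Fin n) (Fin n) ℂ}

private noncomputable def U (hM : M.IsHermitian) : Matrix (Fin n) (Fin n) ℂ := hM.eigenvectorUnitary

lemma U_star_mul (hM : M.IsHermitian) : star (U hM) * U hM = 1 :=
  Unitary.coe_star_mul_self hM.eigenvectorUnitary

lemma U_mul_star (hM : M.IsHermitian) : U hM * star (U hM) = 1 :=
  Unitary.coe_mul_star_self hM.eigenvectorUnitary

lemma cfc_def (hM : M.IsHermitian) (f : ℝ → ℝ) :
    hM.cfc f = U hM * diagonal (Complex.ofReal ∘ f ∘ hM.eigenvalues) * star (U hM) := rfl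

private lemma diagonal_congr {v w : Fin n → ℂ} (h : ∀ i, v i = w i) :
    diagonal v = diagonal w := by
  exact congrArg diagonal (funext h)

lemma cfc_mul' (hM : M.IsHermitian) (f g : ℝ → ℝ) :
    hM.cfc f * hM.cfc g = hM.cfc (fun x => f x * g x) := by
  rw [cfc_def, cfc_def, cfc_def,
    show ∀ (a b c d e f : Matrix (Fin n) (Fin n) ℂ), a*b*c*(d*e*f) = a*(b*(c*d)*e)*f by
      intros; simp only [mul_assoc], U_star_mul]
  rw [mul_one, diagonal_mul_diagonal]
  rw [diagonal_congr (w := Complex.ofReal ∘ (fun x => f x * g x) ∘ hM.eigenvalues)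
    (fun i => by simp)]

lemma cfc_add' (hM : M.IsHermitian) (f g : ℝ → ℝ) :
    hM.cfc f + hM.cfc g = hM.cfc (fun x => f x + g x) := by
  rw [cfc_def, cfc_def, cfc_def, ← add_mul, ← mul_add, diagonal_add]
  rw [diagonal_congr (w := Complex.ofReal ∘ (fun x => f x + g x) ∘ hM.eigenvalues)
    (fun i => by simp)]

lemma cfc_smul' (hM : M.IsHermitian) (r : ℝ) (f : ℝ → ℝ) :
    r • hM.cfc f = hM.cfc (fun x => r * f x) := by
  rw [cfc_def, cfc_def, ← smul_mul_assoc, ← mul_smul_comm, ← diagonal_smul r (Complex.ofReal ∘ f ∘ hM.eigenvalues)]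
  rw [diagonal_congr (w := Complex.ofReal ∘ (fun x => r * f x) ∘ hM.eigenvalues)
    (fun i => by simp [Complex.real_smul])]

lemma cfc_one' (hM : M.IsHermitian) : hM.cfc (fun _ => 1) = 1 := by
  rw [cfc_def]
  rw [diagonal_congr (w := fun _ => (1:ℂ)) (fun i => by simp), Matrix.diagonal_one, mul_one,
    U_mul_star]

lemma cfc_id'' (hM : M.IsHermitian) : hM.cfc (fun x => x) = M := by
  rw [cfc_def]
  exact (hM.spectral_theorem).symm

lemma cfc_congr'' (hM : M.IsHermitian) {f g : ℝ → ℝ}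
    (h : ∀ i, f (hM.eigenvalues i) = g (hM.eigenvalues i)) : hM.cfc f = hM.cfc g := by
  rw [cfc_def, cfc_def,
    diagonal_congr (w := Complex.ofReal ∘ g ∘ hM.eigenvalues) (fun i => by simp [h i])]

lemma cfc_trace_mul (hM : M.IsHermitian) (f : ℝ → ℝ) (C : Matrix (Fin n) (Fin n) ℂ) :
    (hM.cfc f * C).trace
      = ∑ k, (f (hM.eigenvalues k) : ℂ) * ((star (U hM) * C * U hM) k k) := by
  rw [cfc_def]
  rw [show U hM * diagonal (Complex.ofReal ∘ f ∘ hM.eigenvalues) * star (U hM) * C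
      = U hM * (diagonal (Complex.ofReal ∘ f ∘ hM.eigenvalues) * (star (U hM) * C)) by
    simp only [mul_assoc]]
  rw [Matrix.trace_mul_comm, Matrix.trace]
  rw [show diagonal (Complex.ofReal ∘ f ∘ hM.eigenvalues) * (star (U hM) * C) * U hM
      = diagonal (Complex.ofReal ∘ f ∘ hM.eigenvalues) * (star (U hM) * C * U hM) by
    simp only [mul_assoc]]
  congr 1
  ext k
  simp [Matrix.diag, Matrix.diagonal_mul]


lemma posdef_isUnit_det {M : Matrix (Fin n) (Fin n) ℂ} (hM : M.PosDef) : IsUnit M.det :=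
  hM.det_pos.ne'.isUnit

lemma posdef_mul_inv {M : Matrix (Fin n) (Fin n) ℂ} (hM : M.PosDef) : M * M⁻¹ = 1 :=
  Matrix.mul_nonsing_inv M (posdef_isUnit_det hM)

lemma posdef_inv_mul {M : Matrix (Fin n) (Fin n) ℂ} (hM : M.PosDef) : M⁻¹ * M = 1 :=
  Matrix.nonsing_inv_mul M (posdef_isUnit_det hM)

lemma posdef_of_psd_isUnit {M : Matrix (Fin n) (Fin n) ℂ} (hM : M.PosSemidef)
    (h : IsUnit M.det) : M.PosDef := by
  refine PosDef.of_dotProduct_mulVec_pos hM.1 (fun x hx => ?_)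
  rcases (hM.dotProduct_mulVec_nonneg x).lt_or_eq with h' | h'
  · exact h'
  · exfalso
    have hz : M *ᵥ x = 0 := (hM.dotProduct_mulVec_zero_iff x).mp h'.symm
    have : x = 0 := by
      have hinj := Matrix.mulVec_injective_iff_isUnit.mpr (Matrix.isUnit_iff_isUnit_det M |>.2 h)
      have := hinj (by simpa using hz : M *ᵥ x = M *ᵥ 0)
      simpa using this
    exact hx this

lemma posdef_conj {B N : Matrix (Fin n) (Fin n) ℂ} (hB : B.PosDef) (hN : IsUnit N.det) :
    (Nᴴ * B * N).PosDef := by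
  refine PosDef.of_dotProduct_mulVec_pos ?_ (fun x hx => ?_)
  · have := hB.posSemidef.conjTranspose_mul_mul_same N
    exact this.1
  · have hNx : N *ᵥ x ≠ 0 := by
      intro h
      have hinj := Matrix.mulVec_injective_iff_isUnit.mpr (Matrix.isUnit_iff_isUnit_det N |>.2 hN)
      exact hx (by simpa using hinj (by simpa using h : N *ᵥ x = N *ᵥ 0))
    have := hB.dotProduct_mulVec_pos hNx
    rwa [show star x ⬝ᵥ (Nᴴ * B * N) *ᵥ x = star (N *ᵥ x) ⬝ᵥ B *ᵥ (N *ᵥ x) by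
      simp only [star_mulVec, dotProduct_mulVec, vecMul_vecMul]]

lemma trace_re_nonneg {M : Matrix (Fin n) (Fin n) ℂ} (hM : M.PosSemidef) : 0 ≤ M.trace.re := by
  rw [Matrix.trace]
  simp only [Matrix.diag]
  rw [Complex.re_sum]
  apply Finset.sum_nonneg
  intro k _
  have := hM.re_dotProduct_nonneg (Pi.single k 1)
  simpa [dotProduct, Matrix.mulVec, Pi.single_apply, Finset.sum_ite_eq,
    Finset.sum_ite_eq'] using this

lemma hermitian_rsmul {M : Matrix (Fin n) (Fin n) ℂ} (hM : M.IsHermitian) (r : ℝ) :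
    (r • M).IsHermitian := by
  unfold Matrix.IsHermitian at *
  rw [conjTranspose_smul_non_comm, hM] <;> simp

lemma posdef_rsmul {M : Matrix (Fin n) (Fin n) ℂ} (hM : M.PosDef) {r : ℝ} (hr : 0 < r) :
    (r • M).PosDef := by
  refine PosDef.of_dotProduct_mulVec_pos (hermitian_rsmul hM.1 r) (fun x hx => ?_)
  have h := hM.dotProduct_mulVec_pos hx
  have heq : star x ⬝ᵥ (r • M) *ᵥ x = (r:ℂ) * (star x ⬝ᵥ M *ᵥ x) := by
    rw [Matrix.smul_mulVec, dotProduct_smul]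
    simp [Complex.real_smul]
  rw [heq]
  exact mul_pos (by exact_mod_cast hr) h

lemma psd_rsmul {M : Matrix (Fin n) (Fin n) ℂ} (hM : M.PosSemidef) {r : ℝ} (hr : 0 ≤ r) :
    (r • M).PosSemidef := by
  refine PosSemidef.of_dotProduct_mulVec_nonneg (hermitian_rsmul hM.1 r) (fun x => ?_)
  have h := hM.dotProduct_mulVec_nonneg x
  have heq : star x ⬝ᵥ (r • M) *ᵥ x = (r:ℂ) * (star x ⬝ᵥ M *ᵥ x) := by
    rw [Matrix.smul_mulVec, dotProduct_smul]
    simp [Complex.real_smul]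
  rw [heq]
  exact mul_nonneg (by exact_mod_cast hr) h

lemma posdef_conv {A₁ A₂ : Matrix (Fin n) (Fin n) ℂ} (h1 : A₁.PosDef) (h2 : A₂.PosDef)
    {t : ℝ} (ht0 : 0 ≤ t) (ht1 : t ≤ 1) : (t • A₁ + (1 - t) • A₂).PosDef := by
  rcases eq_or_lt_of_le ht0 with h | h
  · rw [← h]
    simpa using h2
  · exact (posdef_rsmul h1 h).add_posSemidef (psd_rsmul h2.posSemidef (by linarith))

lemma rsmul_inv {M : Matrix (Fin n) (Fin n) ℂ} (hM : M.PosDef) {r : ℝ} (hr : r ≠ 0) :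
    (r • M)⁻¹ = r⁻¹ • M⁻¹ := by
  apply Matrix.inv_eq_right_inv
  rw [Matrix.smul_mul, Matrix.mul_smul, smul_smul, posdef_mul_inv hM]
  rw [mul_inv_cancel₀ hr, one_smul]

lemma variational {P Q Y Z : Matrix (Fin n) (Fin n) ℂ} (hP : P.PosDef) (hQ : Q.PosDef)
    (hYZ : Y + Z = 1) :
    ((P⁻¹ + Q⁻¹)⁻¹).trace.re ≤ (Yᴴ * P * Y).trace.re + (Zᴴ * Q * Z).trace.re := by
  have hPi := hP.inv
  have hQi := hQ.inv
  have hW : (P⁻¹ + Q⁻¹).PosDef := hPi.add hQi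
  set S : Matrix (Fin n) (Fin n) ℂ := (P⁻¹ + Q⁻¹)⁻¹ with hSdef
  have hS : S.PosDef := hW.inv
  have hSherm : Sᴴ = S := hS.1
  have hWS : (P⁻¹ + Q⁻¹) * S = 1 := posdef_mul_inv hW
  have hSW : S * (P⁻¹ + Q⁻¹) = 1 := posdef_inv_mul hW
  set U : Matrix (Fin n) (Fin n) ℂ := Y - P⁻¹ * S with hUdef
  have hV : Z - Q⁻¹ * S = -U := by
    have h1 : P⁻¹ * S + Q⁻¹ * S = 1 := by rw [← add_mul]; exact hWS
    have h2 : Z = 1 - Y := by rw [← hYZ]; abel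
    rw [h2, hUdef, ← h1]
    abel
  have K1 : ∀ X : Matrix (Fin n) (Fin n) ℂ, P * (P⁻¹ * X) = X := fun X => by
    rw [← Matrix.mul_assoc, posdef_mul_inv hP, Matrix.one_mul]
  have K2 : ∀ X : Matrix (Fin n) (Fin n) ℂ, P⁻¹ * (P * X) = X := fun X => by
    rw [← Matrix.mul_assoc, posdef_inv_mul hP, Matrix.one_mul]
  have K3 : ∀ X : Matrix (Fin n) (Fin n) ℂ, Q * (Q⁻¹ * X) = X := fun X => by
    rw [← Matrix.mul_assoc, posdef_mul_inv hQ, Matrix.one_mul]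
  have K4 : ∀ X : Matrix (Fin n) (Fin n) ℂ, Q⁻¹ * (Q * X) = X := fun X => by
    rw [← Matrix.mul_assoc, posdef_inv_mul hQ, Matrix.one_mul]
  have hUH : Uᴴ = Yᴴ - S * P⁻¹ := by
    rw [hUdef, conjTranspose_sub, conjTranspose_mul, hSherm, hPi.1]
  have hVH : (-U)ᴴ = Zᴴ - S * Q⁻¹ := by
    rw [← hV, conjTranspose_sub, conjTranspose_mul, hSherm, hQi.1]
  have expand1 : Uᴴ * P * U = Yᴴ * P * Y - Yᴴ * S - S * Y + S * P⁻¹ * S := by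
    rw [hUH, hUdef]
    simp only [Matrix.mul_sub, Matrix.sub_mul, Matrix.mul_assoc, K1, K2,
      posdef_mul_inv hP, posdef_inv_mul hP, Matrix.mul_one, Matrix.one_mul]
    abel
  have expand2 : Uᴴ * Q * U = Zᴴ * Q * Z - Zᴴ * S - S * Z + S * Q⁻¹ * S := by
    have : Uᴴ * Q * U = (-U)ᴴ * Q * (-U) := by
      simp only [conjTranspose_neg, Matrix.neg_mul, Matrix.mul_neg, neg_neg]
    rw [this, hVH, ← hV]
    simp only [Matrix.mul_sub, Matrix.sub_mul, Matrix.mul_assoc, K3, K4,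
      posdef_mul_inv hQ, posdef_inv_mul hQ, Matrix.mul_one, Matrix.one_mul]
    abel
  have hYZH : Yᴴ + Zᴴ = 1 := by
    rw [← conjTranspose_add, hYZ, conjTranspose_one]
  have keyid : Uᴴ * P * U + Uᴴ * Q * U = Yᴴ * P * Y + Zᴴ * Q * Z - S := by
    rw [expand1, expand2]
    have e1 : Yᴴ * S + Zᴴ * S = S := by rw [← Matrix.add_mul, hYZH, Matrix.one_mul]
    have e2 : S * Y + S * Z = S := by rw [← Matrix.mul_add, hYZ, Matrix.mul_one]
    have e3 : S * P⁻¹ * S + S * Q⁻¹ * S = S := by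
      rw [← Matrix.add_mul, ← Matrix.mul_add, hSW, Matrix.one_mul]
    calc Yᴴ * P * Y - Yᴴ * S - S * Y + S * P⁻¹ * S +
          (Zᴴ * Q * Z - Zᴴ * S - S * Z + S * Q⁻¹ * S)
        = Yᴴ * P * Y + Zᴴ * Q * Z - (Yᴴ * S + Zᴴ * S) - (S * Y + S * Z)
          + (S * P⁻¹ * S + S * Q⁻¹ * S) := by abel
      _ = Yᴴ * P * Y + Zᴴ * Q * Z - S := by rw [e1, e2, e3]; abel
  have hgap : (Uᴴ * P * U + Uᴴ * Q * U).PosSemidef := by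
    have h1 := hP.posSemidef.conjTranspose_mul_mul_same U
    have h2 := hQ.posSemidef.conjTranspose_mul_mul_same U
    exact h1.add h2
  have htr := trace_re_nonneg hgap
  rw [keyid] at htr
  rw [Matrix.trace_sub, Matrix.trace_add, Complex.sub_re, Complex.add_re] at htr
  linarith

lemma variational_eq {P Q : Matrix (Fin n) (Fin n) ℂ} (hP : P.PosDef) (hQ : Q.PosDef) :
    (P⁻¹ * (P⁻¹ + Q⁻¹)⁻¹)ᴴ * P * (P⁻¹ * (P⁻¹ + Q⁻¹)⁻¹)
      + (Q⁻¹ * (P⁻¹ + Q⁻¹)⁻¹)ᴴ * Q * (Q⁻¹ * (P⁻¹ + Q⁻¹)⁻¹) = (P⁻¹ + Q⁻¹)⁻¹ := by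
  have hW : (P⁻¹ + Q⁻¹).PosDef := hP.inv.add hQ.inv
  set S : Matrix (Fin n) (Fin n) ℂ := (P⁻¹ + Q⁻¹)⁻¹ with hSdef
  have hS : S.PosDef := hW.inv
  have hSherm : Sᴴ = S := hS.1
  have h1 : (P⁻¹ * S)ᴴ = S * P⁻¹ := by
    rw [conjTranspose_mul, hSherm, hP.inv.1]
  have h2 : (Q⁻¹ * S)ᴴ = S * Q⁻¹ := by
    rw [conjTranspose_mul, hSherm, hQ.inv.1]
  rw [h1, h2]
  have e1 : S * P⁻¹ * P * (P⁻¹ * S) = S * (P⁻¹ * S) := by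
    rw [Matrix.mul_assoc (S * P⁻¹) P, ← Matrix.mul_assoc P P⁻¹ S, posdef_mul_inv hP,
      Matrix.one_mul, Matrix.mul_assoc]
  have e2 : S * Q⁻¹ * Q * (Q⁻¹ * S) = S * (Q⁻¹ * S) := by
    rw [Matrix.mul_assoc (S * Q⁻¹) Q, ← Matrix.mul_assoc Q Q⁻¹ S, posdef_mul_inv hQ,
      Matrix.one_mul, Matrix.mul_assoc]
  rw [e1, e2, ← Matrix.mul_add, ← Matrix.add_mul, ← Matrix.mul_assoc, posdef_inv_mul hW, Matrix.one_mul]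

lemma trace_conv_re (A₁ A₂ : Matrix (Fin n) (Fin n) ℂ) (t : ℝ) :
    ((t • A₁ + (1 - t) • A₂).trace).re = t * A₁.trace.re + (1 - t) * A₂.trace.re := by
  rw [Matrix.trace_add, Matrix.trace_smul, Matrix.trace_smul, Complex.add_re]
  simp [Complex.real_smul]

lemma concave_step {A₁ A₂ B₁ B₂ : Matrix (Fin n) (Fin n) ℂ}
    (hA₁ : A₁.PosDef) (hA₂ : A₂.PosDef) (hB₁ : B₁.PosDef) (hB₂ : B₂.PosDef)
    {t : ℝ} (ht0 : 0 ≤ t) (ht1 : t ≤ 1) {l : ℝ} (hl0 : 0 ≤ l) (hl1 : l ≤ 1) :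
    t * (((1 - l) • A₁⁻¹ + l • B₁⁻¹)⁻¹).trace.re
      + (1 - t) * (((1 - l) • A₂⁻¹ + l • B₂⁻¹)⁻¹).trace.re
    ≤ (((1 - l) • (t • A₁ + (1 - t) • A₂)⁻¹ + l • (t • B₁ + (1 - t) • B₂)⁻¹)⁻¹).trace.re := by
  have hAh : (t • A₁ + (1 - t) • A₂).PosDef := posdef_conv hA₁ hA₂ ht0 ht1
  have hBh : (t • B₁ + (1 - t) • B₂).PosDef := posdef_conv hB₁ hB₂ ht0 ht1
  rcases eq_or_lt_of_le hl0 with h0 | h0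
  · -- l = 0
    have hl : l = 0 := h0.symm
    subst hl
    simp only [sub_zero, one_smul, zero_smul, add_zero]
    rw [Matrix.nonsing_inv_nonsing_inv _ (posdef_isUnit_det hA₁),
      Matrix.nonsing_inv_nonsing_inv _ (posdef_isUnit_det hA₂),
      Matrix.nonsing_inv_nonsing_inv _ (posdef_isUnit_det hAh), trace_conv_re]
  rcases eq_or_lt_of_le hl1 with h1 | h1
  · -- l = 1
    subst h1
    simp only [sub_self, zero_smul, one_smul, zero_add]
    rw [Matrix.nonsing_inv_nonsing_inv _ (posdef_isUnit_det hB₁),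
      Matrix.nonsing_inv_nonsing_inv _ (posdef_isUnit_det hB₂),
      Matrix.nonsing_inv_nonsing_inv _ (posdef_isUnit_det hBh), trace_conv_re]
  · -- 0 < l < 1
    have hl1' : 0 < 1 - l := by linarith
    set r : ℝ := (1 - l)⁻¹ with hrdef
    set s : ℝ := l⁻¹ with hsdef
    have hr : 0 < r := inv_pos.mpr hl1'
    have hs : 0 < s := inv_pos.mpr h0
    have smul_inv_eq : ∀ (A : Matrix (Fin n) (Fin n) ℂ), A.PosDef →
        (1 - l) • A⁻¹ = (r • A)⁻¹ := by
      intro A hA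
      rw [rsmul_inv hA hr.ne', hrdef, inv_inv]
    have smul_inv_eq' : ∀ (A : Matrix (Fin n) (Fin n) ℂ), A.PosDef →
        l • A⁻¹ = (s • A)⁻¹ := by
      intro A hA
      rw [rsmul_inv hA hs.ne', hsdef, inv_inv]
    have hP₁ : (r • A₁).PosDef := posdef_rsmul hA₁ hr
    have hP₂ : (r • A₂).PosDef := posdef_rsmul hA₂ hr
    have hQ₁ : (s • B₁).PosDef := posdef_rsmul hB₁ hs
    have hQ₂ : (s • B₂).PosDef := posdef_rsmul hB₂ hs
    have hPh : (r • (t • A₁ + (1 - t) • A₂)).PosDef := posdef_rsmul hAh hr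
    have hQh : (s • (t • B₁ + (1 - t) • B₂)).PosDef := posdef_rsmul hBh hs
    rw [smul_inv_eq _ hA₁, smul_inv_eq _ hA₂, smul_inv_eq _ hAh,
      smul_inv_eq' _ hB₁, smul_inv_eq' _ hB₂, smul_inv_eq' _ hBh]
    set Ph : Matrix (Fin n) (Fin n) ℂ := r • (t • A₁ + (1 - t) • A₂) with hPhdef
    set Qh : Matrix (Fin n) (Fin n) ℂ := s • (t • B₁ + (1 - t) • B₂) with hQhdef
    have hWh : (Ph⁻¹ + Qh⁻¹).PosDef := hPh.inv.add hQh.inv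
    set S : Matrix (Fin n) (Fin n) ℂ := (Ph⁻¹ + Qh⁻¹)⁻¹ with hSdef
    set Y : Matrix (Fin n) (Fin n) ℂ := Ph⁻¹ * S with hYdef
    set Z : Matrix (Fin n) (Fin n) ℂ := Qh⁻¹ * S with hZdef
    have hYZ : Y + Z = 1 := by
      rw [hYdef, hZdef, ← Matrix.add_mul, hSdef, posdef_mul_inv hWh]
    have hvar₁ := variational hP₁ hQ₁ hYZ
    have hvar₂ := variational hP₂ hQ₂ hYZ
    have hPhsum : Ph = t • (r • A₁) + (1 - t) • (r • A₂) := by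
      rw [hPhdef, smul_add, smul_comm r t, smul_comm r (1 - t)]
    have hQhsum : Qh = t • (s • B₁) + (1 - t) • (s • B₂) := by
      rw [hQhdef, smul_add, smul_comm s t, smul_comm s (1 - t)]
    have mcombP : Yᴴ * Ph * Y = t • (Yᴴ * (r • A₁) * Y) + (1 - t) • (Yᴴ * (r • A₂) * Y) := by
      simp only [hPhsum, Matrix.mul_add, Matrix.add_mul, Matrix.mul_smul, Matrix.smul_mul]
    have mcombQ : Zᴴ * Qh * Z = t • (Zᴴ * (s • B₁) * Z) + (1 - t) • (Zᴴ * (s • B₂) * Z) := by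
      simp only [hQhsum, Matrix.mul_add, Matrix.add_mul, Matrix.mul_smul, Matrix.smul_mul]
    have combP : (Yᴴ * Ph * Y).trace.re
        = t * (Yᴴ * (r • A₁) * Y).trace.re + (1 - t) * (Yᴴ * (r • A₂) * Y).trace.re := by
      rw [mcombP, trace_conv_re]
    have combQ : (Zᴴ * Qh * Z).trace.re
        = t * (Zᴴ * (s • B₁) * Z).trace.re + (1 - t) * (Zᴴ * (s • B₂) * Z).trace.re := by
      rw [mcombQ, trace_conv_re]
    have heq : (Yᴴ * Ph * Y).trace.re + (Zᴴ * Qh * Z).trace.re = S.trace.re := by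
      have := variational_eq hPh hQh
      rw [hYdef, hZdef, hSdef]
      rw [← Complex.add_re, ← Matrix.trace_add, this]
    have c₁ := mul_le_mul_of_nonneg_left hvar₁ ht0
    have c₂ := mul_le_mul_of_nonneg_left hvar₂ (by linarith : (0:ℝ) ≤ 1 - t)
    calc t * (((r • A₁)⁻¹ + (s • B₁)⁻¹)⁻¹).trace.re
          + (1 - t) * (((r • A₂)⁻¹ + (s • B₂)⁻¹)⁻¹).trace.re
        ≤ t * ((Yᴴ * (r • A₁) * Y).trace.re + (Zᴴ * (s • B₁) * Z).trace.re)
          + (1 - t) * ((Yᴴ * (r • A₂) * Y).trace.re + (Zᴴ * (s • B₂) * Z).trace.re) := by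
          exact add_le_add c₁ c₂
      _ = (Yᴴ * Ph * Y).trace.re + (Zᴴ * Qh * Z).trace.re := by
          rw [combP, combQ]; ring
      _ = S.trace.re := heq

lemma matSqrt_eq {A : Matrix (Fin n) (Fin n) ℂ} (hA : A.PosDef) :
    matSqrt A = hA.isHermitian.cfc Real.sqrt := by
  rw [matSqrt, hA.isHermitian.cfc_eq]

lemma matSqrt_mul_self {A : Matrix (Fin n) (Fin n) ℂ} (hA : A.PosDef) :
    matSqrt A * matSqrt A = A := by
  rw [matSqrt_eq hA]
  rw [cfc_mul', cfc_congr'' hA.isHermitian (g := fun x => x)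
    (fun i => Real.mul_self_sqrt (hA.eigenvalues_pos i).le), cfc_id'']

lemma matSqrt_posDef {A : Matrix (Fin n) (Fin n) ℂ} (hA : A.PosDef) :
    (matSqrt A).PosDef := by
  have hpsd : (matSqrt A).PosSemidef := by
    rw [matSqrt_eq hA, cfc_def]
    have hd : (diagonal (Complex.ofReal ∘ Real.sqrt ∘ hA.isHermitian.eigenvalues)).PosSemidef :=
      PosSemidef.diagonal (fun i => Complex.zero_le_real.mpr (Real.sqrt_nonneg _))
    have := hd.mul_mul_conjTranspose_same (U hA.isHermitian)
    rwa [← Matrix.star_eq_conjTranspose] at this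
  apply posdef_of_psd_isUnit hpsd
  have hdet : (matSqrt A).det * (matSqrt A).det = A.det := by
    rw [← Matrix.det_mul, matSqrt_mul_self hA]
  have hAdet : A.det ≠ 0 := hA.det_pos.ne'
  have : (matSqrt A).det ≠ 0 := fun h => hAdet (by rw [← hdet, h, zero_mul])
  exact this.isUnit

lemma cfc_inv'' {M : Matrix (Fin n) (Fin n) ℂ} (hM : M.PosDef) :
    M⁻¹ = hM.isHermitian.cfc (fun x => x⁻¹) := by
  apply Matrix.inv_eq_left_inv
  calc hM.isHermitian.cfc (fun x => x⁻¹) * M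
      = hM.isHermitian.cfc (fun x => x⁻¹) * hM.isHermitian.cfc (fun x => x) := by
        rw [cfc_id'' hM.isHermitian]
    _ = hM.isHermitian.cfc (fun x => x⁻¹ * x) := cfc_mul' hM.isHermitian _ _
    _ = hM.isHermitian.cfc (fun _ => 1) := cfc_congr'' hM.isHermitian (fun i => by
        have := hM.eigenvalues_pos i
        field_simp)
    _ = 1 := cfc_one' hM.isHermitian

set_option maxHeartbeats 2000000 in
lemma key_identity {A B : Matrix (Fin n) (Fin n) ℂ} (hA : A.PosDef) (hB : B.PosDef)
    (hM : ((matSqrt A)⁻¹ * B * (matSqrt A)⁻¹).PosDef)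
    {l : ℝ} (hl0 : 0 ≤ l) (hl1 : l ≤ 1) :
    ((1 - l) • A⁻¹ + l • B⁻¹)⁻¹
      = matSqrt A * hM.isHermitian.cfc (fun x => x / ((1 - l) * x + l)) * matSqrt A := by
  set R : Matrix (Fin n) (Fin n) ℂ := matSqrt A with hRdef
  set M : Matrix (Fin n) (Fin n) ℂ := R⁻¹ * B * R⁻¹ with hMdef
  have hR : R.PosDef := matSqrt_posDef hA
  have hRR : R * R = A := matSqrt_mul_self hA
  have KR1 : ∀ X : Matrix (Fin n) (Fin n) ℂ, R * (R⁻¹ * X) = X := fun X => by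
    rw [← Matrix.mul_assoc, posdef_mul_inv hR, Matrix.one_mul]
  have KR2 : ∀ X : Matrix (Fin n) (Fin n) ℂ, R⁻¹ * (R * X) = X := fun X => by
    rw [← Matrix.mul_assoc, posdef_inv_mul hR, Matrix.one_mul]
  set D : Matrix (Fin n) (Fin n) ℂ := hM.isHermitian.cfc (fun x => x / ((1 - l) * x + l))
    with hDdef
  have hBM : B = R * M * R := by
    rw [hMdef]
    simp only [Matrix.mul_assoc, KR1]
    rw [posdef_inv_mul hR, Matrix.mul_one]
  have hAinv : A⁻¹ = R⁻¹ * R⁻¹ := by rw [← hRR, Matrix.mul_inv_rev]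
  have hBinv : B⁻¹ = R⁻¹ * (M⁻¹ * R⁻¹) := by
    rw [hBM, Matrix.mul_inv_rev, Matrix.mul_inv_rev]
  have star_id : (1 - l) • D + l • (M⁻¹ * D) = 1 := by
    rw [cfc_inv'' hM, hDdef, cfc_mul' hM.isHermitian, cfc_smul' hM.isHermitian,
      cfc_smul' hM.isHermitian]
    rw [cfc_add' hM.isHermitian]
    rw [cfc_congr'' hM.isHermitian (g := fun _ => 1) (fun i => by
      have hx := hM.eigenvalues_pos i
      set x := hM.isHermitian.eigenvalues i
      have hd : 0 < (1 - l) * x + l := by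
        rcases eq_or_lt_of_le hl0 with h | h
        · rw [← h]; simpa using hx
        · have : 0 ≤ (1 - l) * x := mul_nonneg (by linarith) hx.le
          linarith
      field_simp)]
    exact cfc_one' hM.isHermitian
  apply Matrix.inv_eq_right_inv
  calc ((1 - l) • A⁻¹ + l • B⁻¹) * (R * D * R)
      = R⁻¹ * ((((1 - l) • D + l • (M⁻¹ * D))) * R) := by
        simp only [hAinv, hBinv, Matrix.add_mul, Matrix.smul_mul, Matrix.mul_smul,
          Matrix.mul_add, Matrix.mul_assoc, KR1, KR2, smul_add]
    _ = 1 := by rw [star_id, Matrix.one_mul, posdef_inv_mul hR]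

lemma ae_Icc (μ : MeasureTheory.Measure ℝ) [MeasureTheory.IsProbabilityMeasure μ]
    (hμ01 : μ (Set.Icc (0:ℝ) 1) = 1) : ∀ᵐ l ∂μ, l ∈ Set.Icc (0:ℝ) 1 := by
  rw [MeasureTheory.ae_iff]
  have : μ (Set.Icc (0:ℝ) 1)ᶜ = 0 := by
    rw [MeasureTheory.measure_compl measurableSet_Icc (MeasureTheory.measure_ne_top μ _), hμ01]
    simp
  exact this

lemma integrable_h (μ : MeasureTheory.Measure ℝ) [MeasureTheory.IsProbabilityMeasure μ]
    (hμ01 : μ (Set.Icc (0:ℝ) 1) = 1) {x : ℝ} (hx : 0 < x) :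
    MeasureTheory.Integrable (fun l : ℝ => x / ((1 - l) * x + l)) μ := by
  have hmeas : Measurable fun l : ℝ => x / ((1 - l) * x + l) :=
    measurable_const.div
      (((measurable_const.sub measurable_id).mul measurable_const).add measurable_id)
  apply MeasureTheory.Integrable.mono' (MeasureTheory.integrable_const (x / min x 1))
    hmeas.aestronglyMeasurable
  filter_upwards [ae_Icc μ hμ01] with l hl
  obtain ⟨hl0, hl1⟩ := hl
  have hmin : 0 < min x 1 := lt_min hx one_pos
  have hd : min x 1 ≤ (1 - l) * x + l := by
    have h1 : (1 - l) * (min x 1) ≤ (1 - l) * x :=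
      mul_le_mul_of_nonneg_left (min_le_left _ _) (by linarith)
    have h2 : l * (min x 1) ≤ l * 1 := mul_le_mul_of_nonneg_left (min_le_right _ _) hl0
    nlinarith
  rw [Real.norm_eq_abs, abs_of_nonneg (div_nonneg hx.le (le_trans hmin.le hd))]
  exact div_le_div_of_nonneg_left hx.le hmin hd

lemma trace_sandwich {A M : Matrix (Fin n) (Fin n) ℂ} (hA : A.PosDef)
    (hM : M.IsHermitian) (f : ℝ → ℝ) :
    (matSqrt A * hM.cfc f * matSqrt A).trace.re
      = ∑ k, f (hM.eigenvalues k) * ((star (U hM) * A * U hM) k k).re := by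
  rw [Matrix.trace_mul_cycle, matSqrt_mul_self hA, Matrix.trace_mul_comm,
    cfc_trace_mul hM f A, Complex.re_sum]
  congr 1
  ext k
  simp [Complex.mul_re]

lemma repr_lemma (μ : MeasureTheory.Measure ℝ) [MeasureTheory.IsProbabilityMeasure μ]
    (hμ01 : μ (Set.Icc (0:ℝ) 1) = 1) {A B : Matrix (Fin n) (Fin n) ℂ}
    (hA : A.PosDef) (hB : B.PosDef) :
    ∃ g : ℝ → ℝ, MeasureTheory.Integrable g μ ∧
      ((kuboAndo μ A B).trace).re = ∫ l, g l ∂μ ∧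
      ∀ l ∈ Set.Icc (0:ℝ) 1, g l = (((1 - l) • A⁻¹ + l • B⁻¹)⁻¹).trace.re := by
  have hR : (matSqrt A).PosDef := matSqrt_posDef hA
  have hM : ((matSqrt A)⁻¹ * B * (matSqrt A)⁻¹).PosDef := by
    have h := posdef_conj hB (posdef_isUnit_det hR.inv)
    rwa [hR.inv.isHermitian] at h
  set M : Matrix (Fin n) (Fin n) ℂ := (matSqrt A)⁻¹ * B * (matSqrt A)⁻¹ with hMdef
  set ev : Fin n → ℝ := hM.isHermitian.eigenvalues with hev
  set w : Fin n → ℝ := fun k => ((star (U hM.isHermitian) * A * U hM.isHermitian) k k).re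
    with hw
  refine ⟨fun l => ∑ k, (ev k / ((1 - l) * ev k + l)) * w k, ?_, ?_, ?_⟩
  · apply MeasureTheory.integrable_finset_sum
    intro k _
    exact (integrable_h μ hμ01 (hM.eigenvalues_pos k)).mul_const _
  · have h1 : kuboAndo μ A B = matSqrt A * hM.isHermitian.cfc (fmu μ) * matSqrt A := by
      rw [kuboAndo, hM.isHermitian.cfc_eq]
    rw [h1, trace_sandwich hA hM.isHermitian]
    have h2 : ∀ k, fmu μ (ev k) * w k = ∫ l, (ev k / ((1 - l) * ev k + l)) * w k ∂μ := by
      intro k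
      rw [fmu, ← MeasureTheory.integral_mul_const]
    rw [Finset.sum_congr rfl (fun k _ => h2 k),
      ← MeasureTheory.integral_finset_sum _ (fun k _ =>
        (integrable_h μ hμ01 (hM.eigenvalues_pos k)).mul_const _)]
  · intro l hl
    rw [key_identity hA hB hM hl.1 hl.2, trace_sandwich hA hM.isHermitian]

end MyAux

/-- The generalized quantum Hellinger divergence `φ_μ` is jointly convex on
pairs of positive definite matrices. -/
theorem qhd_jointly_convex {n : ℕ} (μ : Measure ℝ) [IsProbabilityMeasure μ]
    (hμ01 : μ (Set.Icc (0 : ℝ) 1) = 1)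
    (A₁ A₂ B₁ B₂ : Matrix (Fin n) (Fin n) ℂ)
    (hA₁ : A₁.PosDef) (hA₂ : A₂.PosDef) (hB₁ : B₁.PosDef) (hB₂ : B₂.PosDef)
    (t : ℝ) (ht0 : 0 ≤ t) (ht1 : t ≤ 1) :
    qhd μ (t • A₁ + (1 - t) • A₂) (t • B₁ + (1 - t) • B₂) ≤
      t * qhd μ A₁ B₁ + (1 - t) * qhd μ A₂ B₂ := by
  classical
  obtain ⟨g₁, hg₁i, hg₁e, hg₁v⟩ := MyAux.repr_lemma μ hμ01 hA₁ hB₁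
  obtain ⟨g₂, hg₂i, hg₂e, hg₂v⟩ := MyAux.repr_lemma μ hμ01 hA₂ hB₂
  have hAh := MyAux.posdef_conv hA₁ hA₂ ht0 ht1
  have hBh := MyAux.posdef_conv hB₁ hB₂ ht0 ht1
  obtain ⟨gh, hghi, hghe, hghv⟩ := MyAux.repr_lemma μ hμ01 hAh hBh
  have hmono : t * ∫ l, g₁ l ∂μ + (1 - t) * ∫ l, g₂ l ∂μ ≤ ∫ l, gh l ∂μ := by
    have hint : MeasureTheory.Integrable (fun l => t * g₁ l + (1 - t) * g₂ l) μ :=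
      (hg₁i.const_mul t).add (hg₂i.const_mul (1 - t))
    have hae : (fun l => t * g₁ l + (1 - t) * g₂ l) ≤ᵐ[μ] gh := by
      filter_upwards [MyAux.ae_Icc μ hμ01] with l hl
      rw [hg₁v l hl, hg₂v l hl, hghv l hl]
      exact MyAux.concave_step hA₁ hA₂ hB₁ hB₂ ht0 ht1 hl.1 hl.2
    have h := MeasureTheory.integral_mono_ae hint hghi hae
    rwa [MeasureTheory.integral_add (hg₁i.const_mul t) (hg₂i.const_mul (1 - t)),
      MeasureTheory.integral_const_mul, MeasureTheory.integral_const_mul] at h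
  have hexp : ∀ (A B : Matrix (Fin n) (Fin n) ℂ),
      qhd μ A B = (1 - cmu μ) * A.trace.re + cmu μ * B.trace.re
        - ((kuboAndo μ A B).trace).re := by
    intro A B
    rw [qhd, Matrix.trace_sub, Matrix.trace_add, Matrix.trace_smul, Matrix.trace_smul,
      Complex.sub_re, Complex.add_re]
    simp [Complex.real_smul, Complex.mul_re]
  rw [hexp, hexp, hexp, hg₁e, hg₂e, hghe, MyAux.trace_conv_re A₁ A₂ t,
    MyAux.trace_conv_re B₁ B₂ t]
  linarith [hmono]
end

section
/- Let μ and ν be Borel probability measures on [0,1] such that μ precedes ν in the convex order, i.e., ∫_{[0,1]} u dμ ≤ ∫_{[0,1]} u dν for every convex function u : [0,1] → ℝ. Then for all positive definite n×n complex matrices A and B, one has A σ_μ B ≤ A σ_ν B in the Loewner order (i.e., A σ_ν B − A σ_μ B is positive semidefinite). -/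
open MeasureTheory Matrix
open scoped ComplexOrder

/-- `μ` precedes `ν` in the convex order: `∫ u dμ ≤ ∫ u dν` for every convex
`u : [0,1] → ℝ`. -/
def ConvexOrder (μ ν : Measure ℝ) : Prop :=
  ∀ u : ℝ → ℝ, ConvexOn ℝ (Set.Icc (0 : ℝ) 1) u → ∫ l, u l ∂μ ≤ ∫ l, u l ∂ν

/-- The integrand of `fmu` is convex in `λ` on `[0,1]`, for fixed `x > 0`. -/
lemma convexOn_fmu_integrand {x : ℝ} (hx : 0 < x) :
    ConvexOn ℝ (Set.Icc (0:ℝ) 1) (fun l => x / ((1 - l) * x + l)) := by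
  have h1 : ConvexOn ℝ (Set.Ioi (0:ℝ)) (fun y : ℝ => y⁻¹) := by
    simpa [_root_.zpow_neg_one] using
      (strictConvexOn_zpow (m := -1) (by norm_num) (by norm_num)).convexOn
  set g : ℝ →ᵃ[ℝ] ℝ := AffineMap.lineMap x 1 with hg
  have hgapp : ∀ l : ℝ, g l = (1 - l) * x + l := by
    intro l
    simp [hg, AffineMap.lineMap_apply, smul_eq_mul]
    ring
  have h2 := h1.comp_affineMap g
  have hsub : Set.Icc (0:ℝ) 1 ⊆ g ⁻¹' Set.Ioi 0 := by
    intro l hl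
    simp only [Set.mem_preimage, Set.mem_Ioi, hgapp]
    rcases eq_or_lt_of_le hl.1 with h | h
    · simpa [← h] using hx
    · have : 0 ≤ (1 - l) * x := mul_nonneg (by linarith [hl.2]) hx.le
      linarith
  have h3 := (h2.subset hsub (convex_Icc 0 1)).smul hx.le
  have : (fun l => x • ((fun y : ℝ => y⁻¹) ∘ g) l) = fun l => x / ((1 - l) * x + l) := by
    funext l
    simp [Function.comp, hgapp l, smul_eq_mul, div_eq_mul_inv]
  rwa [this] at h3

/-- Conjugation of a positive definite matrix by an invertible matrix is positive definite. -/
lemma posDef_conj' {m : Type*} [Fintype m] [DecidableEq m] {B C : Matrix m m ℂ} (hB : B.PosDef)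
    [Invertible C] : (Cᴴ * B * C).PosDef := by
  refine Matrix.PosDef.of_dotProduct_mulVec_pos (Matrix.isHermitian_conjTranspose_mul_mul C hB.1) fun x hx => ?_
  have hx' : C *ᵥ x ≠ 0 := by
    intro h
    exact hx (Matrix.mulVec_injective_of_invertible C (by simpa using h))
  simpa only [star_mulVec, dotProduct_mulVec, vecMul_vecMul] using hB.dotProduct_mulVec_pos hx'

/-- The square root of a positive definite matrix is positive definite. -/
lemma matSqrt_posDef {n : ℕ} {A : Matrix (Fin n) (Fin n) ℂ} (hA : A.PosDef) :
    (matSqrt A).PosDef := by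
  rw [matSqrt, hA.1.cfc_eq, Matrix.IsHermitian.cfc]
  set U : Matrix (Fin n) (Fin n) ℂ :=
    (Matrix.IsHermitian.eigenvectorUnitary hA.1 : Matrix (Fin n) (Fin n) ℂ)
  haveI : Invertible (star U) :=
    ⟨U, Unitary.mul_star_self_of_mem (SetLike.coe_mem _),
      Unitary.star_mul_self_of_mem (SetLike.coe_mem _)⟩
  have hdiag :
      (Matrix.diagonal ((RCLike.ofReal : ℝ → ℂ) ∘ Real.sqrt ∘ hA.1.eigenvalues)).PosDef := by
    refine Matrix.posDef_diagonal_iff.mpr fun i => ?_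
    simp only [Function.comp]
    exact RCLike.ofReal_pos.mpr (Real.sqrt_pos.mpr (hA.eigenvalues_pos i))
  have h := posDef_conj' (C := star U) hdiag
  simpa [star_eq_conjTranspose] using h

/-- If `μ` precedes `ν` in the convex order, then `A σ_μ B ≤ A σ_ν B` in the
Loewner order for all positive definite `A, B`. -/
theorem kuboAndo_mono_of_convexOrder {n : ℕ} (μ ν : Measure ℝ)
    [IsProbabilityMeasure μ] [IsProbabilityMeasure ν]
    (hμ01 : μ (Set.Icc (0 : ℝ) 1) = 1) (hν01 : ν (Set.Icc (0 : ℝ) 1) = 1)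
    (hord : ConvexOrder μ ν)
    (A B : Matrix (Fin n) (Fin n) ℂ) (hA : A.PosDef) (hB : B.PosDef) :
    (kuboAndo ν A B - kuboAndo μ A B).PosSemidef := by
  -- pointwise monotonicity of fmu
  have hfmu : ∀ x : ℝ, 0 < x → fmu μ x ≤ fmu ν x := fun x hx =>
    hord (fun l => x / ((1 - l) * x + l)) (convexOn_fmu_integrand hx)
  -- the square root and its inverse
  set S : Matrix (Fin n) (Fin n) ℂ := matSqrt A with hSdef
  have hS : S.PosDef := matSqrt_posDef hA
  have hSinv : S⁻¹.PosDef := hS.inv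
  haveI : Invertible S⁻¹ := Matrix.invertibleOfIsUnitDet _ hSinv.det_pos.ne'.isUnit
  -- the conjugated matrix D
  set D : Matrix (Fin n) (Fin n) ℂ := S⁻¹ * B * S⁻¹ with hDdef
  have hD : D.PosDef := by
    have : D = (S⁻¹)ᴴ * B * S⁻¹ := by rw [hSinv.1.eq]
    rw [this]
    exact posDef_conj' hB
  have hDH : D.IsHermitian := hD.1
  -- spectral data of D
  set U : Matrix (Fin n) (Fin n) ℂ :=
    (Matrix.IsHermitian.eigenvectorUnitary hDH : Matrix (Fin n) (Fin n) ℂ) with hU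
  set E : Fin n → ℝ := hDH.eigenvalues with hE
  set d : Fin n → ℂ :=
    fun i => (RCLike.ofReal (fmu ν (E i)) : ℂ) - (RCLike.ofReal (fmu μ (E i)) : ℂ) with hd
  have key : kuboAndo ν A B - kuboAndo μ A B = (S * U) * Matrix.diagonal d * (S * U)ᴴ := by
    have hcfc : ∀ ρ : Measure ℝ,
        cfc (fmu ρ) D = U * Matrix.diagonal ((RCLike.ofReal : ℝ → ℂ) ∘ fmu ρ ∘ E) * star U :=
      fun ρ => hDH.cfc_eq (fmu ρ)
    have hconj : (S * U)ᴴ = star U * S := by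
      rw [Matrix.conjTranspose_mul, ← star_eq_conjTranspose, hS.1.eq]
    rw [kuboAndo, kuboAndo, ← hSdef, ← hDdef, hcfc, hcfc, hconj]
    have : Matrix.diagonal d =
        Matrix.diagonal ((RCLike.ofReal : ℝ → ℂ) ∘ fmu ν ∘ E) -
        Matrix.diagonal ((RCLike.ofReal : ℝ → ℂ) ∘ fmu μ ∘ E) := by
      rw [Matrix.diagonal_sub]
      rfl
    rw [this]
    simp only [Matrix.mul_sub, Matrix.sub_mul, Matrix.mul_assoc]
  rw [key]
  refine Matrix.PosSemidef.mul_mul_conjTranspose_same ?_ (S * U)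
  refine Matrix.PosSemidef.diagonal fun i => ?_
  have h0 : (0:ℂ) ≤ (RCLike.ofReal (fmu ν (E i)) : ℂ) - (RCLike.ofReal (fmu μ (E i)) : ℂ) := by
    rw [sub_nonneg]
    exact RCLike.ofReal_le_ofReal.mpr (hfmu (E i) (hD.eigenvalues_pos i))
  simpa [hd] using h0
end
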